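/- Let R, B ⊆ ℝ be finite sets, λ > 0, and suppose every x ∈ R is an endpoint of a closed interval I_x with |B ∩ I_x| ≥ λ·|R ∩ I_x|. Then |B| ≥ λ·|R|/3. -/
import Mathlib

open Finset

/-- Red-blue covering lemma, unweighted version: if every `x ∈ R` is an endpoint
of a closed interval `I_x` with `|B ∩ I_x| ≥ λ·|R ∩ I_x|`, then `|B| ≥ λ·|R|/3`. -/
theorem red_blue_covering_unweighted
    (R B : Finset ℝ) (lam : ℝ) (hlam : 0 < lam)
    (h : ∀ x ∈ R, ∃ y : ℝ,
      lam * ((R.filter (fun p => min x y ≤ p ∧ p ≤ max x y)).card : ℝ) ≤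
        ((B.filter (fun p => min x y ≤ p ∧ p ≤ max x y)).card : ℝ)) :
    lam * (R.card : ℝ) / 3 ≤ (B.card : ℝ) := by
  classical
  choose! f hf using h
  -- Covering predicate
  have hRcov : ∀ r ∈ R, ∃ x ∈ R, min x (f x) ≤ r ∧ r ≤ max x (f x) :=
    fun r hr => ⟨r, hr, min_le_left _ _, le_max_left _ _⟩
  -- minimal subcover
  obtain ⟨S, hSmem, hmin⟩ := (R.powerset.filter
      (fun S => ∀ r ∈ R, ∃ x ∈ S, min x (f x) ≤ r ∧ r ≤ max x (f x))).exists_min_image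
      Finset.card ⟨R, by
        simp only [mem_filter, mem_powerset]
        exact ⟨Finset.Subset.refl R, hRcov⟩⟩
  simp only [mem_filter, mem_powerset] at hSmem
  obtain ⟨hSsub, hScov⟩ := hSmem
  -- multiplicity bound: every point lies in at most 2 intervals of S
  have hmult : ∀ p : ℝ,
      (S.filter (fun x => min x (f x) ≤ p ∧ p ≤ max x (f x))).card ≤ 2 := by
    intro p
    by_contra hc
    push_neg at hc
    set T := S.filter (fun x => min x (f x) ≤ p ∧ p ≤ max x (f x)) with hT
    have hTne : T.Nonempty := card_pos.mp (by omega)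
    obtain ⟨a, haT, hamin⟩ := T.exists_min_image (fun x => min x (f x)) hTne
    obtain ⟨b, hbT, hbmax⟩ := T.exists_max_image (fun x => max x (f x)) hTne
    have h2 : 0 < ((T.erase a).erase b).card := by
      have h3 := card_erase_le (s := T.erase a) (a := b)
      have h4 := card_erase_le (s := T) (a := a)
      have h5 : T.card - 2 ≤ ((T.erase a).erase b).card := by
        rcases em (b ∈ T.erase a) with hb | hb
        · rw [card_erase_of_mem hb, card_erase_of_mem haT]; omega
        · rw [erase_eq_of_notMem hb, card_erase_of_mem haT]; omega
      omega
    obtain ⟨c, hcE⟩ := card_pos.mp h2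
    have hcb : c ≠ b := (mem_erase.mp hcE).1
    have hca : c ≠ a := (mem_erase.mp (mem_erase.mp hcE).2).1
    have hcT : c ∈ T := (mem_erase.mp (mem_erase.mp hcE).2).2
    have hcS : c ∈ S := mem_of_mem_filter _ hcT
    have hcP : min c (f c) ≤ p ∧ p ≤ max c (f c) := (mem_filter.mp hcT).2
    have haP : min a (f a) ≤ p ∧ p ≤ max a (f a) := (mem_filter.mp haT).2
    have hbP : min b (f b) ≤ p ∧ p ≤ max b (f b) := (mem_filter.mp hbT).2
    -- S.erase c still covers R
    have hcov' : ∀ r ∈ R, ∃ x ∈ S.erase c, min x (f x) ≤ r ∧ r ≤ max x (f x) := by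
      intro r hr
      obtain ⟨x, hxS, hx1, hx2⟩ := hScov r hr
      rcases em (x = c) with hxc | hxc
      · rw [hxc] at hx1 hx2
        rcases le_total r p with hrp | hpr
        · exact ⟨a, mem_erase.mpr ⟨hca.symm, mem_of_mem_filter _ haT⟩,
            le_trans (hamin c hcT) hx1, le_trans hrp haP.2⟩
        · exact ⟨b, mem_erase.mpr ⟨hcb.symm, mem_of_mem_filter _ hbT⟩,
            le_trans hbP.1 hpr, le_trans hx2 (hbmax c hcT)⟩

      · exact ⟨x, mem_erase.mpr ⟨hxc, hxS⟩, hx1, hx2⟩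
    have hmem' : S.erase c ∈ R.powerset.filter
        (fun S => ∀ r ∈ R, ∃ x ∈ S, min x (f x) ≤ r ∧ r ≤ max x (f x)) := by
      simp only [mem_filter, mem_powerset]
      exact ⟨(erase_subset _ _).trans hSsub, hcov'⟩
    have := hmin _ hmem'
    have := card_erase_lt_of_mem hcS
    omega
  -- double counting for B
  have hBsum : ∑ x ∈ S, (B.filter (fun p => min x (f x) ≤ p ∧ p ≤ max x (f x))).card
      ≤ 2 * B.card := by
    have heq : ∑ x ∈ S, (B.filter (fun p => min x (f x) ≤ p ∧ p ≤ max x (f x))).card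
        = ∑ b ∈ B, (S.filter (fun x => min x (f x) ≤ b ∧ b ≤ max x (f x))).card := by
      simp only [card_filter]
      rw [Finset.sum_comm]
    rw [heq]
    calc ∑ b ∈ B, (S.filter (fun x => min x (f x) ≤ b ∧ b ≤ max x (f x))).card
        ≤ ∑ _b ∈ B, 2 := Finset.sum_le_sum (fun b _ => hmult b)
      _ = 2 * B.card := by rw [Finset.sum_const]; ring
  -- covering lower bound for R
  have hRsum : R.card ≤
      ∑ x ∈ S, (R.filter (fun p => min x (f x) ≤ p ∧ p ≤ max x (f x))).card := by
    have hsub : R ⊆ S.biUnion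
        (fun x => R.filter (fun p => min x (f x) ≤ p ∧ p ≤ max x (f x))) := by
      intro r hr
      obtain ⟨x, hxS, hx1, hx2⟩ := hScov r hr
      exact mem_biUnion.mpr ⟨x, hxS, mem_filter.mpr ⟨hr, hx1, hx2⟩⟩
    exact le_trans (card_le_card hsub) (card_biUnion_le)
  -- real arithmetic
  have h1 : lam * (R.card : ℝ) ≤
      ∑ x ∈ S, lam * ((R.filter (fun p => min x (f x) ≤ p ∧ p ≤ max x (f x))).card : ℝ) := by
    rw [← Finset.mul_sum]
    apply mul_le_mul_of_nonneg_left _ hlam.le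
    exact_mod_cast hRsum
  have h2 : ∑ x ∈ S, lam * ((R.filter (fun p => min x (f x) ≤ p ∧ p ≤ max x (f x))).card : ℝ)
      ≤ ∑ x ∈ S, ((B.filter (fun p => min x (f x) ≤ p ∧ p ≤ max x (f x))).card : ℝ) :=
    Finset.sum_le_sum (fun x hx => hf x (hSsub hx))
  have h3 : (∑ x ∈ S,
      ((B.filter (fun p => min x (f x) ≤ p ∧ p ≤ max x (f x))).card : ℝ))
      ≤ 2 * (B.card : ℝ) := by exact_mod_cast hBsum
  have hB0 : (0 : ℝ) ≤ (B.card : ℝ) := Nat.cast_nonneg _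
  linarith
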